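/- Let P(z_1,...,z_N) be any polynomial and fix a ≤ N. Substitute z_i = z + λξ_i for i = 1,...,a with Σξ_i = 0, expand P = Σ_m λ^m Q^m, and let s be the smallest m with Q^m ≠ 0. Then s ≤ S_a, where S_a is the minimal total degree of P in the variables z_1,...,z_a (minimum over monomials of P of the sum of exponents of z_1,...,z_a). Moreover s = S_a if and only if Q^s is not divisible by z. -/

import Mathlib

open MvPolynomial

noncomputable section

/-- Variable type for the fusion of the first `a` variables: `Sum.inl i` are the
auxiliary variables `ξ i`, `Sum.inr none` is the fused variable (center of mass)
`z`, and `Sum.inr (some j)` are the untouched variables `z j` for `a ≤ j`. -/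
abbrev FVars (N : ℕ) := Fin N ⊕ Option (Fin N)

/-- The auxiliary variables `ξ i` for `i < a`, with the constraint `∑ ξ i = 0`
imposed by eliminating the last one. -/
def fuseXi (N a : ℕ) (i : Fin N) : MvPolynomial (FVars N) ℂ :=
  if i.val + 1 < a then X (Sum.inl i)
  else -(∑ j ∈ Finset.univ.filter (fun j : Fin N => j.val + 1 < a), X (Sum.inl j))

/-- Fusion substitution `z i = z + λ * ξ i` for `i < a`, where `λ` is the
polynomial variable and `z = X (Sum.inr none)`. -/
def fuse (N a : ℕ) : MvPolynomial (Fin N) ℂ →ₐ[ℂ] Polynomial (MvPolynomial (FVars N) ℂ) :=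
  MvPolynomial.aeval (fun i =>
    if i.val < a then Polynomial.C (X (Sum.inr none)) + Polynomial.X * Polynomial.C (fuseXi N a i)
    else Polynomial.C (X (Sum.inr (some i))))

/-- `Qcoeff N a P m` is the coefficient `Q^m` of `λ^m` in the fusion expansion of `P`. -/
def Qcoeff (N a : ℕ) (P : MvPolynomial (Fin N) ℂ) (m : ℕ) : MvPolynomial (FVars N) ℂ :=
  (fuse N a P).coeff m

/-- `minDeg N P a` is `S_a`: the minimal total degree of `P` in `z 1, ..., z a`. -/
def minDeg (N : ℕ) (P : MvPolynomial (Fin N) ℂ) (a : ℕ) : ℕ :=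
  sInf {d | ∃ mo ∈ P.support, d = ∑ i ∈ Finset.univ.filter (fun i : Fin N => i.val < a), mo i}

/-- Translation invariance of a multivariate polynomial. -/
def TransInv (N : ℕ) (P : MvPolynomial (Fin N) ℂ) : Prop :=
  ∀ c : ℂ, MvPolynomial.aeval (fun i : Fin N => X i + MvPolynomial.C c) P = P

/-- Symmetry of a multivariate polynomial. -/
def SymmPoly (N : ℕ) (P : MvPolynomial (Fin N) ℂ) : Prop :=
  ∀ σ : Equiv.Perm (Fin N), rename ⇑σ P = P

namespace Stmt4Aux

variable (N a : ℕ)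

abbrev W (N : ℕ) := MvPolynomial (Fin N ⊕ Fin N) ℂ
abbrev T (N : ℕ) := Polynomial (Polynomial (W N))

def dc (p : T N) (m k : ℕ) : W N := (p.coeff m).coeff k

def wt (i : Fin N) : ℕ := if i.val < a then 1 else 0

def xiW (i : Fin N) : W N :=
  if i.val + 1 < a then X (Sum.inl i)
  else -(∑ j ∈ Finset.univ.filter (fun j : Fin N => j.val + 1 < a), X (Sum.inl j))

def genG (i : Fin N) : T N :=
  if i.val < a then
    Polynomial.C Polynomial.X + Polynomial.C (Polynomial.C (xiW N a i)) * Polynomial.X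
  else Polynomial.C (Polynomial.C (MvPolynomial.X (Sum.inr i)))

def G : MvPolynomial (Fin N) ℂ →ₐ[ℂ] T N := aeval (genG N a)

def e : Option (Fin N ⊕ Fin N) ≃ FVars N where
  toFun o := match o with
    | none => Sum.inr none
    | some (Sum.inl i) => Sum.inl i
    | some (Sum.inr i) => Sum.inr (some i)
  invFun v := match v with
    | Sum.inl i => some (Sum.inl i)
    | Sum.inr none => none
    | Sum.inr (some i) => some (Sum.inr i)
  left_inv := by rintro (_ | (i | i)) <;> rfl
  right_inv := by rintro (i | (_ | i)) <;> rfl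

def E : Polynomial (W N) ≃ₐ[ℂ] MvPolynomial (FVars N) ℂ :=
  (optionEquivLeft ℂ (Fin N ⊕ Fin N)).symm.trans (renameEquiv ℂ (e N))

lemma E_X : E N Polynomial.X = X (Sum.inr none) := by
  have h : (optionEquivLeft ℂ (Fin N ⊕ Fin N)).symm Polynomial.X
      = X (none : Option (Fin N ⊕ Fin N)) := by
    rw [AlgEquiv.symm_apply_eq, optionEquivLeft_X_none]
  simp only [E, AlgEquiv.trans_apply, h, renameEquiv_apply, rename_X]
  rfl

lemma E_C (p : W N) : E N (Polynomial.C p) = rename (fun v => e N (some v)) p := by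
  have h : (E N).toAlgHom.comp Polynomial.CAlgHom
      = (rename (fun v => e N (some v)) : W N →ₐ[ℂ] MvPolynomial (FVars N) ℂ) := by
    apply MvPolynomial.algHom_ext
    intro s
    have h1 : (optionEquivLeft ℂ (Fin N ⊕ Fin N)).symm (Polynomial.C (X s))
        = X (some s : Option (Fin N ⊕ Fin N)) := by
      rw [AlgEquiv.symm_apply_eq, optionEquivLeft_X_some]
    simp [E, Polynomial.CAlgHom, h1]
  exact congrArg (fun f => f p) (congrArg DFunLike.coe h) |>.trans rfl

lemma fuse_eq : (Polynomial.mapAlgHom (E N).toAlgHom).comp (G N a) = fuse N a := by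
  apply MvPolynomial.algHom_ext
  intro i
  simp only [AlgHom.comp_apply, G, aeval_X, genG, fuse]
  rw [Polynomial.coe_mapAlgHom]
  have hco : ∀ x, ((E N).toAlgHom : Polynomial (W N) →+* MvPolynomial (FVars N) ℂ) x
      = E N x := fun x => rfl
  split_ifs with h
  · rw [Polynomial.map_add, Polynomial.map_mul, Polynomial.map_C, Polynomial.map_C,
      Polynomial.map_X]
    simp only [hco]
    rw [E_X, E_C]
    have hxi : rename (fun v => e N (some v)) (xiW N a i) = fuseXi N a i := by
      rw [xiW, fuseXi]
      split_ifs with h2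
      · rw [rename_X]; rfl
      · rw [map_neg, map_sum]
        congr 1
        apply Finset.sum_congr rfl
        intro j _
        rw [rename_X]
        rfl
    rw [hxi]
    ring
  · rw [Polynomial.map_C]
    simp only [hco]
    rw [E_C, rename_X]
    rfl

lemma Qcoeff_eq (P : MvPolynomial (Fin N) ℂ) (m : ℕ) :
    Qcoeff N a P m = E N ((G N a P).coeff m) := by
  rw [Qcoeff, ← fuse_eq]
  simp only [AlgHom.comp_apply, Polynomial.coe_mapAlgHom, Polynomial.coeff_map]
  rfl

end Stmt4Aux

namespace Stmt4Aux

variable (N a : ℕ)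

def avg : MvPolynomial (Fin N) ℂ :=
  (a : ℂ)⁻¹ • ∑ i ∈ Finset.univ.filter (fun i : Fin N => i.val < a), X i

def vL : Fin N ⊕ Fin N → MvPolynomial (Fin N) ℂ
  | Sum.inl i => if i.val + 1 < a then X i - avg N a else 0
  | Sum.inr i => X i

def L1 : Polynomial (W N) →ₐ[ℂ] MvPolynomial (Fin N) ℂ :=
  Polynomial.aevalTower (aeval (vL N a)) (avg N a)

def LL : T N →ₐ[ℂ] MvPolynomial (Fin N) ℂ :=
  Polynomial.aevalTower (L1 N a) 1

lemma card_filter_lt (ha : a ≤ N) :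
    (Finset.univ.filter (fun i : Fin N => i.val < a)).card = a := by
  have : Finset.univ.filter (fun i : Fin N => i.val < a)
      = (Finset.univ : Finset (Fin a)).map
        ⟨fun j => ⟨j.1, lt_of_lt_of_le j.2 ha⟩, by
          intro x y hxy
          have hv := congrArg Fin.val hxy
          exact Fin.ext hv⟩ := by
    ext j
    simp only [Finset.mem_filter, Finset.mem_univ, true_and, Finset.mem_map,
      Function.Embedding.coeFn_mk]
    constructor
    · intro hj; exact ⟨⟨j.1, hj⟩, rfl⟩
    · rintro ⟨x, -, rfl⟩; exact x.2
  rw [this, Finset.card_map, Finset.card_univ, Fintype.card_fin]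

lemma LL_G (ha : a ≤ N) : (LL N a).comp (G N a) = AlgHom.id ℂ _ := by
  apply MvPolynomial.algHom_ext
  intro i
  simp only [AlgHom.comp_apply, G, aeval_X, genG, AlgHom.id_apply]
  split_ifs with h
  · rw [map_add, map_mul]
    simp only [LL, L1, Polynomial.aevalTower_C, Polynomial.aevalTower_X, mul_one]
    rw [xiW]
    split_ifs with h2
    · rw [aeval_X]
      show avg N a + (if i.val + 1 < a then X i - avg N a else 0) = X i
      rw [if_pos h2]; ring
    · rw [map_neg, map_sum]
      have hstep : ∀ j ∈ Finset.univ.filter (fun j : Fin N => j.val + 1 < a),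
          aeval (vL N a) (X (Sum.inl j) : W N) = X j - avg N a := by
        intro j hj
        rw [aeval_X]
        show (if j.val + 1 < a then X j - avg N a else 0) = X j - avg N a
        rw [if_pos (Finset.mem_filter.1 hj).2]
      rw [Finset.sum_congr rfl hstep, Finset.sum_sub_distrib, Finset.sum_const]
      -- notation
      set A := Finset.univ.filter (fun j : Fin N => j.val < a) with hA
      set A' := Finset.univ.filter (fun j : Fin N => j.val + 1 < a) with hA'
      have haa : a = i.val + 1 := le_antisymm (not_lt.1 h2) h
      have hiA : i ∈ A := by simp [hA, h]
      have hA'e : A' = A.erase i := by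
        ext j
        simp only [hA, hA', Finset.mem_filter, Finset.mem_univ, true_and, Finset.mem_erase,
          ne_eq, Fin.ext_iff]
        omega
      have hsum : ∑ j ∈ A, (X j : MvPolynomial (Fin N) ℂ) = X i + ∑ j ∈ A', X j := by
        rw [hA'e, Finset.add_sum_erase _ _ hiA]
      have hcard : A.card = a := card_filter_lt N a ha
      have hcard' : A'.card = a - 1 := by
        rw [hA'e, Finset.card_erase_of_mem hiA, hcard]
      have ha0 : (a : ℂ) ≠ 0 := by
        rw [haa]; exact_mod_cast Nat.succ_ne_zero i.val
      have hkey : (a : ℕ) • avg N a = ∑ j ∈ A, (X j : MvPolynomial (Fin N) ℂ) := by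
        rw [avg, ← Nat.cast_smul_eq_nsmul ℂ, smul_smul, mul_inv_cancel₀ ha0, one_smul]
      have h1 : avg N a + (a - 1) • avg N a = ∑ j ∈ A, (X j : MvPolynomial (Fin N) ℂ) := by
        calc avg N a + (a - 1) • avg N a = (1 + (a - 1)) • avg N a := by
              rw [add_nsmul, one_nsmul]
          _ = a • avg N a := by congr 1; omega
          _ = _ := hkey
      have h2 : ∑ j ∈ A', (X j : MvPolynomial (Fin N) ℂ)
          = ∑ j ∈ A, (X j : MvPolynomial (Fin N) ℂ) - X i := by
        rw [hsum]; ring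
      rw [neg_sub, hcard', h2, ← h1]
      abel
  · simp only [LL, L1, Polynomial.aevalTower_C, aeval_X]
    rfl

end Stmt4Aux

namespace Stmt4Aux

variable (N a : ℕ)

def Hom (d : ℕ) (p : T N) : Prop := ∀ m k, dc N p m k ≠ 0 → m + k = d

variable {N a}

lemma dc_add (p q : T N) (m k : ℕ) : dc N (p + q) m k = dc N p m k + dc N q m k := by
  simp [dc]

lemma dc_sum {ι : Type*} (s : Finset ι) (f : ι → T N) (m k : ℕ) :
    dc N (∑ x ∈ s, f x) m k = ∑ x ∈ s, dc N (f x) m k := by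
  simp [dc, Polynomial.finset_sum_coeff]

lemma hom_zero (d : ℕ) : Hom N d (0 : T N) := by
  intro m k h
  simp [dc] at h

lemma hom_add {d : ℕ} {p q : T N} (hp : Hom N d p) (hq : Hom N d q) : Hom N d (p + q) := by
  intro m k h
  rw [dc_add] at h
  by_cases h1 : dc N p m k = 0
  · exact hq m k (by rw [h1, zero_add] at h; exact h)
  · exact hp m k h1

lemma hom_sum {ι : Type*} {d : ℕ} (s : Finset ι) (f : ι → T N)
    (hf : ∀ x ∈ s, Hom N d (f x)) : Hom N d (∑ x ∈ s, f x) := by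
  classical
  induction s using Finset.induction_on with
  | empty => simpa using hom_zero d
  | insert _ _ hx ih =>
    rw [Finset.sum_insert hx]
    exact hom_add (hf _ (Finset.mem_insert_self _ _))
      (ih fun x hxs => hf x (Finset.mem_insert_of_mem hxs))

lemma hom_CC (q : Polynomial (W N)) (hq : q.natDegree = 0) : Hom N 0 (Polynomial.C q) := by
  intro m k h
  rw [dc, Polynomial.coeff_C] at h
  by_cases hm : m = 0
  · subst hm
    by_cases hk : k = 0
    · omega
    · exfalso
      apply h
      rw [if_pos rfl]
      exact Polynomial.coeff_eq_zero_of_natDegree_lt (by omega)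
  · simp [if_neg hm] at h

lemma hom_mul {d₁ d₂ : ℕ} {p q : T N} (hp : Hom N d₁ p) (hq : Hom N d₂ q) :
    Hom N (d₁ + d₂) (p * q) := by
  intro m k h
  by_contra hne
  apply h
  rw [dc, Polynomial.coeff_mul, Polynomial.finset_sum_coeff]
  apply Finset.sum_eq_zero
  rintro ⟨x1, x2⟩ hx
  rw [Finset.HasAntidiagonal.mem_antidiagonal] at hx
  rw [Polynomial.coeff_mul]
  apply Finset.sum_eq_zero
  rintro ⟨y1, y2⟩ hy
  rw [Finset.HasAntidiagonal.mem_antidiagonal] at hy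
  by_cases h1 : dc N p x1 y1 = 0
  · rw [dc] at h1; rw [h1, zero_mul]
  by_cases h2 : dc N q x2 y2 = 0
  · rw [dc] at h2; rw [h2, mul_zero]
  exfalso
  exact hne (by have e1 := hp _ _ h1; have e2 := hq _ _ h2; omega)

lemma hom_congr {d d' : ℕ} {p : T N} (h : d = d') (hp : Hom N d p) : Hom N d' p := h ▸ hp

lemma hom_pow {d : ℕ} {p : T N} (hp : Hom N d p) (n : ℕ) : Hom N (n * d) (p ^ n) := by
  induction n with
  | zero =>
    simpa using hom_CC (1 : Polynomial (W N)) (by simp)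
  | succ n ih =>
    rw [pow_succ]
    exact hom_congr (by ring) (hom_mul ih hp)

lemma hom_prod {ι : Type*} (s : Finset ι) (f : ι → T N) (g : ι → ℕ)
    (hf : ∀ x ∈ s, Hom N (g x) (f x)) : Hom N (∑ x ∈ s, g x) (∏ x ∈ s, f x) := by
  classical
  induction s using Finset.induction_on with
  | empty => simpa using hom_CC (1 : Polynomial (W N)) (by simp)
  | insert _ _ hx ih =>
    rw [Finset.sum_insert hx, Finset.prod_insert hx]
    exact hom_mul (hf _ (Finset.mem_insert_self _ _))
      (ih fun x hxs => hf x (Finset.mem_insert_of_mem hxs))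

lemma hom_genG (i : Fin N) : Hom N (wt N a i) (genG N a i) := by
  rw [genG, wt]
  split_ifs with h
  · intro m k hmk
    rw [dc] at hmk
    match m with
    | 0 =>
      rw [Polynomial.coeff_add, Polynomial.coeff_C, if_pos rfl, Polynomial.coeff_C_mul,
        Polynomial.coeff_X_zero, mul_zero, add_zero] at hmk
      have hk : k = 1 := by
        by_contra hk
        rw [Polynomial.coeff_X, if_neg (fun hh => hk hh.symm)] at hmk
        exact hmk rfl
      omega
    | 1 =>
      rw [Polynomial.coeff_add, Polynomial.coeff_C, if_neg one_ne_zero, Polynomial.coeff_C_mul,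
        Polynomial.coeff_X_one, mul_one, zero_add, Polynomial.coeff_C] at hmk
      have hk : k = 0 := by
        by_contra hk
        rw [if_neg hk] at hmk
        exact hmk rfl
      omega
    | (m + 2) =>
      exfalso
      apply hmk
      rw [Polynomial.coeff_add, Polynomial.coeff_C, if_neg (by omega), Polynomial.coeff_C_mul,
        Polynomial.coeff_X, if_neg (by omega), mul_zero, add_zero, Polynomial.coeff_zero]
  · exact hom_CC _ (by simp)

lemma hom_G_monomial (mo : Fin N →₀ ℕ) (c : ℂ) :
    Hom N (Finsupp.weight (wt N a) mo) (G N a (monomial mo c)) := by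
  rw [monomial_eq, map_mul]
  have h1 : G N a (C c) = Polynomial.C (Polynomial.C (MvPolynomial.C c)) := by
    rw [G, algHom_C]
    rfl
  rw [h1]
  have h2 : G N a (mo.prod fun n e => X n ^ e) = ∏ i ∈ mo.support, (genG N a i) ^ mo i := by
    rw [Finsupp.prod, map_prod]
    apply Finset.prod_congr rfl
    intro i _
    rw [map_pow, G, aeval_X]
  rw [h2]
  have h3 : (Finsupp.weight (wt N a) mo : ℕ) = 0 + ∑ i ∈ mo.support, mo i * wt N a i := by
    rw [zero_add, Finsupp.weight_apply, Finsupp.sum]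
    apply Finset.sum_congr rfl
    intro i _
    rw [smul_eq_mul]
  exact hom_congr h3.symm
    (hom_mul (hom_CC _ (by simp)) (hom_prod _ _ _ fun i _ => hom_pow (hom_genG i) (mo i)))

lemma hom_G {d : ℕ} {P : MvPolynomial (Fin N) ℂ}
    (hP : IsWeightedHomogeneous (wt N a) P d) : Hom N d (G N a P) := by
  conv => rw [← support_sum_monomial_coeff P]
  rw [map_sum]
  apply hom_sum
  intro mo hmo
  exact hom_congr (hP (mem_support_iff.1 hmo)) (hom_G_monomial mo _)

lemma main_dc (P : MvPolynomial (Fin N) ℂ) (m k : ℕ) :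
    dc N (G N a P) m k
      = dc N (G N a (weightedHomogeneousComponent (wt N a) (m + k) P)) m k := by
  conv_lhs => rw [← support_sum_monomial_coeff P]
  conv_rhs => rw [← support_sum_monomial_coeff P]
  rw [map_sum (weightedHomogeneousComponent (wt N a) (m + k)), map_sum, map_sum, dc_sum, dc_sum]
  apply Finset.sum_congr rfl
  intro mo _
  by_cases hw : Finsupp.weight (wt N a) mo = m + k
  · rw [(isWeightedHomogeneous_monomial _ _ _ hw).weightedHomogeneousComponent_same]
  · rw [(isWeightedHomogeneous_monomial (wt N a) mo (coeff mo P) rfl).weightedHomogeneousComponent_ne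
      (m + k) (fun h => hw h.symm)]
    rw [map_zero]
    have hz : dc N (0 : T N) m k = 0 := by simp [dc]
    rw [hz]
    by_contra h
    exact hw ((hom_G_monomial mo (coeff mo P)) m k h).symm

end Stmt4Aux

namespace Stmt4Aux

variable {N a : ℕ}

lemma weight_eq (mo : Fin N →₀ ℕ) :
    (Finsupp.weight (wt N a) mo)
      = ∑ i ∈ Finset.univ.filter (fun i : Fin N => i.val < a), mo i := by
  rw [Finsupp.weight_apply, Finsupp.sum_fintype _ _ (fun i => by simp), Finset.sum_filter]
  apply Finset.sum_congr rfl
  intro i _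
  rw [smul_eq_mul, wt]
  split_ifs <;> simp

end Stmt4Aux


open Stmt4Aux in
theorem stmt4 (N a : ℕ) (ha : a ≤ N) (P : MvPolynomial (Fin N) ℂ) (s : ℕ)
    (hs : Qcoeff N a P s ≠ 0 ∧ ∀ m < s, Qcoeff N a P m = 0) :
    s ≤ minDeg N P a ∧
      (s = minDeg N P a ↔ ¬ (X (Sum.inr none) : MvPolynomial (FVars N) ℂ) ∣ Qcoeff N a P s) := by
  classical
  obtain ⟨hQs, hlow⟩ := hs
  set q : T N := G N a P with hqdef
  have hQE : ∀ m, Qcoeff N a P m = E N (q.coeff m) := fun m => Qcoeff_eq N a P m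
  have hqs : q.coeff s ≠ 0 := fun h => hQs (by rw [hQE, h, map_zero])
  have hqlow : ∀ m < s, q.coeff m = 0 := by
    intro m hm
    have h1 := hlow m hm
    rw [hQE] at h1
    have : E N (q.coeff m) = E N 0 := by rw [h1, map_zero]
    exact (E N).injective this
  have hP0 : P ≠ 0 := by
    rintro rfl
    rw [hqdef] at hqs
    rw [map_zero] at hqs
    exact hqs (by simp)
  have hne : {d | ∃ mo ∈ P.support,
      d = ∑ i ∈ Finset.univ.filter (fun i : Fin N => i.val < a), mo i}.Nonempty := by
    obtain ⟨mo, hmo⟩ := MvPolynomial.support_nonempty.2 hP0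
    exact ⟨_, mo, hmo, rfl⟩
  have hSmem := Nat.sInf_mem hne
  have hSle : ∀ d ∈ {d | ∃ mo ∈ P.support,
      d = ∑ i ∈ Finset.univ.filter (fun i : Fin N => i.val < a), mo i},
      minDeg N P a ≤ d := fun d hd => Nat.sInf_le hd
  set S := minDeg N P a with hSdef
  obtain ⟨mo₀, hmo₀, hS⟩ := hSmem
  have hw₀ : Finsupp.weight (wt N a) mo₀ = S := by rw [weight_eq]; exact hS.symm
  set PS := weightedHomogeneousComponent (wt N a) S P with hPSdef
  have hPS : PS ≠ 0 := by
    intro h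
    have hc := coeff_weightedHomogeneousComponent (w := wt N a) S P mo₀
    rw [← hPSdef, h, coeff_zero, if_pos hw₀] at hc
    exact (mem_support_iff.1 hmo₀) hc.symm
  have hGPS : G N a PS ≠ 0 := by
    intro h
    apply hPS
    have h2 := AlgHom.congr_fun (LL_G N a ha) PS
    rw [AlgHom.comp_apply, h, map_zero, AlgHom.id_apply] at h2
    exact h2.symm
  have hHom : Hom N S (G N a PS) :=
    hom_G (weightedHomogeneousComponent_isWeightedHomogeneous S P)
  have hmain : ∀ m k, m + k = S → dc N q m k = dc N (G N a PS) m k := by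
    intro m k hmk
    rw [hqdef, main_dc P m k, hmk]
  have hclaim1 : s ≤ S := by
    obtain ⟨m, hm⟩ : ∃ m, (G N a PS).coeff m ≠ 0 := by
      by_contra h
      push_neg at h
      exact hGPS (Polynomial.ext (by simpa using h))
    obtain ⟨k, hk⟩ : ∃ k, dc N (G N a PS) m k ≠ 0 := by
      by_contra h
      push_neg at h
      exact hm (Polynomial.ext (by simpa [dc] using h))
    have hmk : m + k = S := hHom m k hk
    have hdcq : dc N q m k ≠ 0 := by rw [hmain m k hmk]; exact hk
    have hqm : q.coeff m ≠ 0 := fun h => hdcq (by rw [dc, h, Polynomial.coeff_zero])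
    by_contra hlt
    push_neg at hlt
    exact hqm (hqlow m (by omega))
  have hdvd : (X (Sum.inr none) : MvPolynomial (FVars N) ℂ) ∣ Qcoeff N a P s
      ↔ (q.coeff s).coeff 0 = 0 := by
    rw [hQE, ← E_X N]
    constructor
    · rintro ⟨t, ht⟩
      rw [← Polynomial.X_dvd_iff]
      refine ⟨(E N).symm t, (E N).injective ?_⟩
      rw [map_mul, AlgEquiv.apply_symm_apply]
      exact ht
    · intro h0
      exact map_dvd (E N) (Polynomial.X_dvd_iff.2 h0)
  refine ⟨hclaim1, ?_, ?_⟩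
  · intro heq hdv
    have h00 : dc N q s 0 = 0 := hdvd.1 hdv
    apply hGPS
    apply Polynomial.ext
    intro m
    rw [Polynomial.coeff_zero]
    apply Polynomial.ext
    intro k
    rw [Polynomial.coeff_zero]
    show dc N (G N a PS) m k = 0
    by_cases hw : m + k = S
    · rw [← hmain m k hw]
      rcases Nat.lt_or_ge m s with hms | hms
      · rw [dc, hqlow m hms, Polynomial.coeff_zero]
      · have hm : m = s := by omega
        have hk : k = 0 := by omega
        rw [hm, hk]
        exact h00
    · by_contra h
      exact hw (hHom m k h)
  · intro hndvd
    have h00 : dc N q s 0 ≠ 0 := fun h => hndvd (hdvd.2 h)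
    have h01 : dc N (G N a (weightedHomogeneousComponent (wt N a) s P)) s 0 ≠ 0 := by
      have hmd := main_dc (a := a) P s 0
      rw [Nat.add_zero] at hmd
      rw [← hmd]
      exact h00
    have hwc : weightedHomogeneousComponent (wt N a) s P ≠ 0 := by
      intro h
      rw [h, map_zero] at h01
      exact h01 (by simp [dc])
    obtain ⟨mo, hmo⟩ := MvPolynomial.ne_zero_iff.1 hwc
    rw [coeff_weightedHomogeneousComponent] at hmo
    by_cases hh : Finsupp.weight (wt N a) mo = s
    · have hcoeff : coeff mo P ≠ 0 := by rwa [if_pos hh] at hmo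
      have hmem : s ∈ {d | ∃ mo ∈ P.support,
          d = ∑ i ∈ Finset.univ.filter (fun i : Fin N => i.val < a), mo i} :=
        ⟨mo, mem_support_iff.2 hcoeff, by rw [← weight_eq, hh]⟩
      have := hSle s hmem
      omega
    · rw [if_neg hh] at hmo
      exact absurd rfl hmo
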